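/- arXiv:1709.01835 — 2 statements merged into one kernel-verified Lean document; each statement's English description precedes it below -/
import Mathlib

section
/- Let Γ be a profinite group and G a finite group. Every continuous extension 1 → G → E → Γ → 1 of profinite groups (with G carrying the discrete topology and its image closed in E) is the pullback of an extension of finite groups: there exists an open normal subgroup H' ⊴ Γ and an extension 1 → G → Ẽ → Γ/H' → 1 of finite groups such that E ≅ Ẽ ×_{Γ/H'} Γ as topological groups. -/
/-- The fiber product `Ẽ ×_{Γ/H'} Γ` of `π̃ : Ẽ → Γ/H'` and the quotient map
`Γ → Γ/H'`, as a subgroup of the product `Ẽ × Γ`. -/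
def galoisFiberProduct {Et Γ : Type*} [Group Et] [Group Γ]
    (H' : Subgroup Γ) [H'.Normal] (πt : Et →* Γ ⧸ H') : Subgroup (Et × Γ) :=
  (πt.comp (MonoidHom.fst Et Γ)).eqLocus
    ((QuotientGroup.mk' H').comp (MonoidHom.snd Et Γ))

/-- Every continuous extension `1 → G → E → Γ → 1` of profinite groups by a finite
group `G` is the pullback of an extension of finite groups: there are an open normal
subgroup `H' ⊴ Γ` and an extension `1 → G → Ẽ → Γ/H' → 1` of finite groups with
`E ≅ Ẽ ×_{Γ/H'} Γ` as topological groups, where `Ẽ` carries the discrete topology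
and the fiber product the subspace topology of the product. -/
theorem profinite_extension_is_pullback
    {G E Γ : Type*} [Group G] [Finite G]
    [Group E] [TopologicalSpace E] [IsTopologicalGroup E]
    [CompactSpace E] [T2Space E] [TotallyDisconnectedSpace E]
    [Group Γ] [TopologicalSpace Γ] [IsTopologicalGroup Γ]
    [CompactSpace Γ] [T2Space Γ] [TotallyDisconnectedSpace Γ]
    (ι : G →* E) (π : E →* Γ) (hπcont : Continuous π)
    (hι : Function.Injective ι) (hπ : Function.Surjective π)
    (hexact : ι.range = π.ker) (hclosed : IsClosed (ι.range : Set E)) :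
    ∃ H' : Subgroup Γ, ∃ _ : H'.Normal, IsOpen (H' : Set Γ) ∧
      ∃ (Et : Type) (_ : Group Et) (_ : Finite Et)
        (πt : Et →* Γ ⧸ H') (ιt : G →* Et),
        Function.Surjective πt ∧ Function.Injective ιt ∧ ιt.range = πt.ker ∧
        ∃ e : E ≃* galoisFiberProduct H' πt,
          (letI : TopologicalSpace Et := ⊥
           Continuous (e : E → galoisFiberProduct H' πt) ∧
             Continuous (e.symm : galoisFiberProduct H' πt → E)) := by
  classical
  -- the kernel of `π` is finite
  have hkerfin : (π.ker : Set E).Finite := by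
    rw [← hexact]
    exact Set.finite_range ι
  -- find an open normal subgroup `N` of `E` with `N ∩ ker π = 1`
  have hUopen : IsOpen ((π.ker : Set E) \ {1})ᶜ :=
    ((hkerfin.subset Set.diff_subset).isClosed).isOpen_compl
  have h1U : (1 : E) ∈ ((π.ker : Set E) \ {1})ᶜ := by
    simp
  obtain ⟨V, hVclopen, h1V, hVU⟩ := compact_exists_isClopen_in_isOpen hUopen h1U
  obtain ⟨N, hNV⟩ :=
    IsTopologicalGroup.exist_openNormalSubgroup_sub_clopen_nhds_of_one hVclopen h1V
  have hNtriv : ∀ x : E, x ∈ N.toSubgroup → x ∈ π.ker → x = 1 := by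
    intro x hxN hxK
    by_contra hx1
    exact (hVU (hNV hxN)) ⟨hxK, hx1⟩
  -- `π` is a quotient map
  have hπquot : Topology.IsQuotientMap π :=
    (hπcont.isClosedMap).isQuotientMap hπcont hπ
  -- the open normal subgroup `H' = π(N)` of `Γ`
  refine ⟨N.toSubgroup.map π, N.isNormal'.map π hπ, ?_, ?_⟩
  · -- openness of `π(N)`
    rw [← hπquot.isOpen_preimage]
    have : π ⁻¹' (N.toSubgroup.map π : Set Γ) = ⋃ k ∈ (π.ker : Set E), (· * k) ⁻¹' N := by
      ext x
      simp only [Set.mem_preimage, Subgroup.coe_map, Set.mem_image, SetLike.mem_coe,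
        Set.mem_iUnion]
      constructor
      · rintro ⟨n, hn, hnx⟩
        refine ⟨x⁻¹ * n, ?_, ?_⟩
        · simp [MonoidHom.mem_ker, hnx]
        · simp only [mul_inv_cancel_left]
          exact hn
      · rintro ⟨k, hk, hxk⟩
        refine ⟨x * k, hxk, ?_⟩
        simp only [SetLike.mem_coe, MonoidHom.mem_ker] at hk
        simp [hk]
    rw [this]
    exact isOpen_biUnion fun k _ => (N.isOpen').preimage (continuous_mul_right k)
  set H' : Subgroup Γ := N.toSubgroup.map π with hH'
  haveI : H'.Normal := N.isNormal'.map π hπ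
  -- the finite quotient `E ⧸ N` and its small model
  haveI : Finite (E ⧸ N.toSubgroup) := N.toSubgroup.quotient_finite_of_isOpen N.isOpen'
  let s : Shrink.{0} (E ⧸ N.toSubgroup) ≃* (E ⧸ N.toSubgroup) := Shrink.mulEquiv
  -- the maps of the finite extension
  have hle : N.toSubgroup ≤ H'.comap π := fun x hx => Subgroup.mem_map_of_mem π hx
  let πt0 : (E ⧸ N.toSubgroup) →* Γ ⧸ H' := QuotientGroup.map N.toSubgroup H' π hle
  refine ⟨Shrink.{0} (E ⧸ N.toSubgroup), inferInstance,
    Finite.of_equiv _ s.symm.toEquiv,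
    πt0.comp s.toMonoidHom, s.symm.toMonoidHom.comp ((QuotientGroup.mk' N.toSubgroup).comp ι),
    ?_, ?_, ?_, ?_⟩
  · -- surjectivity of πt
    intro q
    obtain ⟨γ, rfl⟩ := QuotientGroup.mk_surjective q
    obtain ⟨x, rfl⟩ := hπ γ
    refine ⟨s.symm (QuotientGroup.mk x), ?_⟩
    show πt0 (s (s.symm (QuotientGroup.mk x))) = QuotientGroup.mk (π x)
    rw [s.apply_symm_apply]
    exact QuotientGroup.map_mk _ _ _ _ _
  · -- injectivity of ιt
    intro a b hab
    apply hι
    have h2 : QuotientGroup.mk (s := N.toSubgroup) (ι a) = QuotientGroup.mk (ι b) :=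
      s.symm.injective hab
    rw [QuotientGroup.eq] at h2
    have hk : (ι a)⁻¹ * ι b ∈ π.ker := by
      rw [← hexact]
      exact ⟨a⁻¹ * b, by simp⟩
    have := hNtriv _ h2 hk
    rw [inv_mul_eq_one] at this
    exact this
  · -- exactness
    ext q
    simp only [MonoidHom.mem_range, MonoidHom.mem_ker]
    constructor
    · rintro ⟨g, rfl⟩
      have hg1 : π (ι g) = 1 := by
        have : ι g ∈ π.ker := hexact ▸ ⟨g, rfl⟩
        exact this
      show πt0 (s (s.symm (QuotientGroup.mk (ι g)))) = 1
      rw [s.apply_symm_apply]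
      show (QuotientGroup.mk (π (ι g)) : Γ ⧸ H') = 1
      rw [hg1]
      rfl
    · intro hq
      obtain ⟨z, rfl⟩ := s.symm.surjective q
      obtain ⟨y, rfl⟩ := QuotientGroup.mk_surjective z
      have hq1 : (QuotientGroup.mk (π y) : Γ ⧸ H') = 1 := by
        have h : πt0 (s (s.symm (QuotientGroup.mk y))) = 1 := hq
        rwa [s.apply_symm_apply] at h
      have hq' : π y ∈ H' := (QuotientGroup.eq_one_iff (π y)).mp hq1
      obtain ⟨n, hn, hny⟩ := hq'
      have hker : y * n⁻¹ ∈ ι.range := by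
        rw [hexact, MonoidHom.mem_ker]
        simp [hny]
      obtain ⟨g, hg⟩ := hker
      refine ⟨g, ?_⟩
      have hmk : QuotientGroup.mk (s := N.toSubgroup) (ι g) = QuotientGroup.mk y := by
        rw [hg, QuotientGroup.eq]
        simpa using N.toSubgroup.inv_mem (N.toSubgroup.inv_mem hn)
      show s.symm (QuotientGroup.mk (ι g)) = s.symm (QuotientGroup.mk y)
      exact congrArg (⇑s.symm) hmk
  · -- the isomorphism
    have hmem : ∀ x : E,
        ((s.symm (QuotientGroup.mk x), π x) : Shrink.{0} (E ⧸ N.toSubgroup) × Γ) ∈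
          galoisFiberProduct H' (πt0.comp s.toMonoidHom) := by
      intro x
      show πt0 (s (s.symm (QuotientGroup.mk x))) = QuotientGroup.mk (π x)
      rw [s.apply_symm_apply]
      exact QuotientGroup.map_mk _ _ _ _ _
    let f : E →* galoisFiberProduct H' (πt0.comp s.toMonoidHom) :=
      MonoidHom.codRestrict
        ((s.symm.toMonoidHom.comp (QuotientGroup.mk' N.toSubgroup)).prod π) _
        (fun x => hmem x)
    have hfval : ∀ x : E,
        (f x : Shrink.{0} (E ⧸ N.toSubgroup) × Γ) = (s.symm (QuotientGroup.mk x), π x) :=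
      fun x => rfl
    have hfbij : Function.Bijective f := by
      constructor
      · intro x y hxy
        have hv := congrArg Subtype.val hxy
        rw [hfval, hfval] at hv
        have h1 : s.symm (QuotientGroup.mk x) = s.symm (QuotientGroup.mk y) :=
          congrArg Prod.fst hv
        have h2 : π x = π y := congrArg Prod.snd hv
        have h1' : QuotientGroup.mk (s := N.toSubgroup) x = QuotientGroup.mk y :=
          s.symm.injective h1
        rw [QuotientGroup.eq] at h1'
        have hk : x⁻¹ * y ∈ π.ker := by
          rw [MonoidHom.mem_ker]
          simp [h2]
        have := hNtriv _ h1' hk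
        rw [inv_mul_eq_one] at this
        exact this
      · rintro ⟨⟨q, γ⟩, hqγ⟩
        obtain ⟨x, hx⟩ := QuotientGroup.mk_surjective (s q)
        have h3 : πt0 (QuotientGroup.mk x) = QuotientGroup.mk γ := by
          have h : πt0 (s q) = QuotientGroup.mk γ := hqγ
          rwa [← hx] at h
        have hγ : (π x)⁻¹ * γ ∈ H' := by
          rw [← QuotientGroup.eq]
          exact h3
        obtain ⟨n, hn, hnγ⟩ := hγ
        refine ⟨x * n, Subtype.ext (Prod.ext ?_ ?_)⟩
        · show s.symm (QuotientGroup.mk (x * n)) = q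
          have hxn : QuotientGroup.mk (s := N.toSubgroup) (x * n) = QuotientGroup.mk x := by
            rw [QuotientGroup.eq]
            simpa using N.toSubgroup.inv_mem (N.toSubgroup.inv_mem hn)
          rw [hxn, hx]
          exact s.symm_apply_apply q
        · show π (x * n) = γ
          rw [map_mul, hnγ]
          group
    refine ⟨MulEquiv.ofBijective f hfbij, ?_⟩
    letI : TopologicalSpace (Shrink.{0} (E ⧸ N.toSubgroup)) := ⊥
    haveI : DiscreteTopology (Shrink.{0} (E ⧸ N.toSubgroup)) := ⟨rfl⟩
    -- continuity of the quotient-and-shrink map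
    have hmkcont : Continuous (fun x : E => s.symm (QuotientGroup.mk x)) := by
      rw [continuous_discrete_rng]
      intro b
      obtain ⟨z, hz⟩ := s.symm.surjective b
      obtain ⟨y, hy⟩ := QuotientGroup.mk_surjective z
      have hset : (fun x : E => s.symm (QuotientGroup.mk x)) ⁻¹' {b} =
          (fun x : E => y⁻¹ * x) ⁻¹' (N.toSubgroup : Set E) := by
        ext x
        simp only [Set.mem_preimage, Set.mem_singleton_iff, SetLike.mem_coe]
        rw [← hz, ← hy, s.symm.apply_eq_iff_eq, Eq.comm, QuotientGroup.eq]
      rw [hset]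
      exact N.isOpen'.preimage (continuous_mul_left y⁻¹)
    have hfcont : Continuous (f : E → galoisFiberProduct H' (πt0.comp s.toMonoidHom)) :=
      Continuous.subtype_mk (hmkcont.prodMk hπcont) _
    have hecont : Continuous
        ((MulEquiv.ofBijective f hfbij) : E → galoisFiberProduct H' (πt0.comp s.toMonoidHom)) :=
      hfcont
    refine ⟨hecont, ?_⟩
    have hsymm : Continuous ((MulEquiv.ofBijective f hfbij).toEquiv.symm) :=
      Continuous.continuous_symm_of_equiv_compact_to_t2
        (f := (MulEquiv.ofBijective f hfbij).toEquiv) hecont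
    exact hsymm
end

section
/- Let A be a graded ring generated over A₀ = k by finitely many elements (not necessarily of the same degree), where k is a field. Then there exists d ≥ 1 such that the Veronese subring A^{(d)} = ⊕_{m≥0} A_{md} is generated as a k-algebra by A_d, i.e., by finitely many elements of degree d. -/
/-- From a multiset one can extract a sub-multiset of any smaller cardinality. -/
lemma veronese_aux_exists_le_card {α : Type*} (F : Multiset α) :
    ∀ n, n ≤ Multiset.card F → ∃ N ≤ F, Multiset.card N = n := by
  induction F using Multiset.induction with
  | empty =>
    intro n hn
    simp only [Multiset.card_zero, Nat.le_zero] at hn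
    exact ⟨0, le_refl _, by simp [hn]⟩
  | cons a F ih =>
    intro n hn
    cases n with
    | zero => exact ⟨0, zero_le, rfl⟩
    | succ n =>
      obtain ⟨N, hN, hc⟩ := ih n (by simpa using hn)
      exact ⟨a ::ₘ N, Multiset.cons_le_cons a hN, by simp [hc]⟩

/-- Pigeonhole: a multiset of (zero-or-)divisors of `e` with sum at least `e²`
contains some positive divisor `v` of `e` with multiplicity at least `e / v`. -/
lemma veronese_aux_pigeonhole (e : ℕ) (he : 1 ≤ e) (D : Multiset ℕ)
    (hdvd : ∀ a ∈ D, a = 0 ∨ a ∣ e) (hsum : e * e ≤ D.sum) :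
    ∃ v, 0 < v ∧ v ∣ e ∧ e / v ≤ D.count v := by
  classical
  by_contra hcon
  push_neg at hcon
  have hterm : ∀ a ∈ D.toFinset, D.count a * a ≤ e - 1 := by
    intro a ha
    rcases hdvd a (Multiset.mem_toFinset.mp ha) with h0 | hdv
    · subst h0; simp
    · have hpos : 0 < a := Nat.pos_of_dvd_of_pos hdv he
      have h1 : D.count a + 1 ≤ e / a := hcon a hpos hdv
      have h2 : (D.count a + 1) * a ≤ (e / a) * a := Nat.mul_le_mul_right a h1
      have h3 : (e / a) * a = e := Nat.div_mul_cancel hdv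
      have h4 : D.count a * a + a ≤ e := by nlinarith
      omega
  have hsubr : D.toFinset ⊆ Finset.range (e + 1) := by
    intro a ha
    rcases hdvd a (Multiset.mem_toFinset.mp ha) with h0 | hdv
    · simp [h0]
    · exact Finset.mem_range.mpr (Nat.lt_succ_of_le (Nat.le_of_dvd he hdv))
  have hcount : D.sum = ∑ a ∈ D.toFinset, D.count a * a := by
    rw [Finset.sum_multiset_count D]
    simp [smul_eq_mul]
  have hbound : D.sum ≤ (e + 1) * (e - 1) := by
    rw [hcount]
    calc ∑ a ∈ D.toFinset, D.count a * a ≤ ∑ _a ∈ D.toFinset, (e - 1) :=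
          Finset.sum_le_sum hterm
      _ = D.toFinset.card * (e - 1) := by simp [Finset.sum_const, smul_eq_mul]
      _ ≤ (e + 1) * (e - 1) := by
          apply Nat.mul_le_mul_right
          calc D.toFinset.card ≤ (Finset.range (e + 1)).card := Finset.card_le_card hsubr
            _ = e + 1 := Finset.card_range _
  obtain ⟨t, rfl⟩ : ∃ t, e = t + 1 := ⟨e - 1, by omega⟩
  have : (t + 1 + 1) * (t + 1 - 1) < (t + 1) * (t + 1) := by
    simp only [Nat.add_sub_cancel]
    nlinarith
  omega

/-- Extract a sub-multiset whose degrees sum to exactly `e`. -/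
lemma veronese_aux_extract_one {α : Type*} (deg : α → ℕ) (e : ℕ) (he : 1 ≤ e)
    (M : Multiset α) (hdvd : ∀ y ∈ M, deg y = 0 ∨ deg y ∣ e)
    (hsum : e * e ≤ (M.map deg).sum) :
    ∃ N ≤ M, (N.map deg).sum = e := by
  classical
  obtain ⟨v, hv, hdv, hc⟩ := veronese_aux_pigeonhole e he (M.map deg)
    (by
      intro a ha
      obtain ⟨y, hy, rfl⟩ := Multiset.mem_map.mp ha
      exact hdvd y hy) hsum
  rw [Multiset.count_map] at hc
  obtain ⟨N, hNF, hNc⟩ := veronese_aux_exists_le_card _ (e / v) hc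
  refine ⟨N, le_trans hNF (Multiset.filter_le _ M), ?_⟩
  have hall : ∀ b ∈ N.map deg, b = v := by
    intro b hb
    obtain ⟨y, hy, rfl⟩ := Multiset.mem_map.mp hb
    exact (Multiset.of_mem_filter (Multiset.mem_of_le hNF hy)).symm
  have : N.map deg = Multiset.replicate (e / v) v := by
    rw [Multiset.eq_replicate]
    exact ⟨by simp [hNc], hall⟩
  rw [this, Multiset.sum_replicate, smul_eq_mul, Nat.div_mul_cancel hdv]

/-- Extract a sub-multiset whose degrees sum to exactly `j * e`. -/
lemma veronese_aux_extract {α : Type*} [DecidableEq α] (deg : α → ℕ) (e : ℕ) (he : 1 ≤ e) :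
    ∀ (j : ℕ) (M : Multiset α), (∀ y ∈ M, deg y = 0 ∨ deg y ∣ e) →
      j * e + e * e ≤ (M.map deg).sum + e →
      ∃ N ≤ M, (N.map deg).sum = j * e := by
  intro j
  induction j with
  | zero => exact fun M _ _ => ⟨0, zero_le, by simp⟩
  | succ j ih =>
    intro M hdvd hsum
    have hje : (j + 1) * e = j * e + e := by ring
    have h1 : e * e ≤ (M.map deg).sum := by
      have h2 : 1 * e ≤ j * e + e := by nlinarith
      omega
    obtain ⟨N0, hN0, hs0⟩ := veronese_aux_extract_one deg e he M hdvd h1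
    have hMeq : N0 + (M - N0) = M := add_tsub_cancel_of_le hN0
    have hsum_split : (M.map deg).sum = e + ((M - N0).map deg).sum := by
      conv_lhs => rw [← hMeq]
      rw [Multiset.map_add, Multiset.sum_add, hs0]
    obtain ⟨N1, hN1, hs1⟩ := ih (M - N0)
      (fun y hy => hdvd y (Multiset.mem_of_le (tsub_le_self) hy))
      (by omega)
    refine ⟨N0 + N1, ?_, ?_⟩
    · calc N0 + N1 ≤ N0 + (M - N0) := add_le_add le_rfl hN1
        _ = M := hMeq
    · rw [Multiset.map_add, Multiset.sum_add, hs0, hs1, hje]; ring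

/-- A product of homogeneous elements is homogeneous of the total degree. -/
lemma veronese_aux_prod_mem_graded {k A : Type*} [Field k] [CommRing A] [Algebra k A]
    (𝒜 : ℕ → Submodule k A) [GradedAlgebra 𝒜] (deg : A → ℕ) (M : Multiset A)
    (h : ∀ y ∈ M, y ∈ 𝒜 (deg y)) : M.prod ∈ 𝒜 ((M.map deg).sum) := by
  induction M using Multiset.induction with
  | empty => simpa using SetLike.GradedOne.one_mem (A := 𝒜)
  | cons a M ih =>
    rw [Multiset.prod_cons, Multiset.map_cons, Multiset.sum_cons]
    exact SetLike.mul_mem_graded (h a (Multiset.mem_cons_self a M))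
      (ih fun y hy => h y (Multiset.mem_cons_of_mem hy))

/-- Let `A = ⊕ Aₘ` be a commutative graded ring with `A₀ = k` a field, generated as a
`k`-algebra by finitely many homogeneous elements. Then there is `d ≥ 1` such that
the Veronese subring `A^{(d)} = ⊕ A_{md}` is generated as a `k`-algebra by the
degree-`d` part `A_d`. -/
theorem veronese_generated_in_single_degree
    {k A : Type*} [Field k] [CommRing A] [Algebra k A]
    (𝒜 : ℕ → Submodule k A) [GradedAlgebra 𝒜]
    (h0 : ∀ x ∈ 𝒜 0, ∃ c : k, algebraMap k A c = x)
    (s : Finset A) (hhom : ∀ x ∈ s, SetLike.IsHomogeneousElem 𝒜 x)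
    (hgen : Algebra.adjoin k (s : Set A) = ⊤) :
    ∃ d : ℕ, 1 ≤ d ∧
      ∀ m : ℕ, (𝒜 (m * d) : Set A) ⊆
        (Algebra.adjoin k ((𝒜 d : Submodule k A) : Set A) : Subalgebra k A) := by
  classical
  set deg : A → ℕ := fun x => if h : SetLike.IsHomogeneousElem 𝒜 x then h.choose else 0 with hdeg_def
  have hdeg : ∀ x ∈ s, x ∈ 𝒜 (deg x) := by
    intro x hx
    have h := hhom x hx
    simp only [hdeg_def, dif_pos h]
    exact h.choose_spec
  set e : ℕ := ∏ x ∈ s, max 1 (deg x) with he_def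
  have he : 1 ≤ e := Finset.one_le_prod' fun x _ => le_max_left _ _
  have hd : 1 ≤ e * e := Nat.one_le_iff_ne_zero.mpr (by positivity)
  refine ⟨e * e, hd, ?_⟩
  set d : ℕ := e * e with hd_def
  set S : Subalgebra k A := Algebra.adjoin k ((𝒜 d : Submodule k A) : Set A) with hS_def
  have hdvd : ∀ y ∈ s, deg y = 0 ∨ deg y ∣ e := by
    intro y hy
    by_cases h : deg y = 0
    · exact Or.inl h
    · right
      have hmax : max 1 (deg y) = deg y := max_eq_right (Nat.one_le_iff_ne_zero.mpr h)
      exact hmax ▸ Finset.dvd_prod_of_mem _ hy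
  -- key: every monomial in the generators of degree `m * d` lies in `S`
  have key : ∀ m : ℕ, ∀ M : Multiset A, (∀ y ∈ M, y ∈ s) →
      (M.map deg).sum = m * d → M.prod ∈ S := by
    intro m
    induction m using Nat.strong_induction_on with
    | _ m ih =>
      intro M hM hsum
      have hprodmem : M.prod ∈ 𝒜 ((M.map deg).sum) :=
        veronese_aux_prod_mem_graded 𝒜 deg M (fun y hy => hdeg y (hM y hy))
      rcases Nat.lt_or_ge m 2 with hm | hm
      · interval_cases m
        · obtain ⟨c, hc⟩ := h0 M.prod (by rwa [hsum, Nat.zero_mul] at hprodmem)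
          exact hc ▸ S.algebraMap_mem c
        · exact Algebra.subset_adjoin (by rwa [hsum, Nat.one_mul] at hprodmem)
      · obtain ⟨N, hNM, hNs⟩ := veronese_aux_extract deg e he e M
          (fun y hy => hdvd y (hM y hy))
          (by
            rw [hsum]
            have : 2 * d ≤ m * d := Nat.mul_le_mul_right d hm
            rw [hd_def] at this ⊢
            nlinarith)
        rw [← hd_def] at hNs
        have hMeq : N + (M - N) = M := add_tsub_cancel_of_le hNM
        have hsum_split : ((M - N).map deg).sum + d = m * d := by
          have : (M.map deg).sum = d + ((M - N).map deg).sum := by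
            conv_lhs => rw [← hMeq]
            rw [Multiset.map_add, Multiset.sum_add, hNs]
          omega
        have h1 : N.prod ∈ S := by
          apply Algebra.subset_adjoin
          have := veronese_aux_prod_mem_graded 𝒜 deg N
            (fun y hy => hdeg y (hM y (Multiset.mem_of_le hNM hy)))
          rwa [hNs] at this
        have h2 : (M - N).prod ∈ S := by
          apply ih (m - 1) (by omega) (M - N)
            (fun y hy => hM y (Multiset.mem_of_le (tsub_le_self) hy))
          have hmd : (m - 1) * d = m * d - d := by
            cases m with
            | zero => omega
            | succ m => simp [Nat.succ_sub_one, Nat.succ_mul]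
          omega
        have hfac : M.prod = N.prod * (M - N).prod := by
          rw [← Multiset.prod_add, hMeq]
        rw [hfac]
        exact S.mul_mem h1 h2
  -- projection argument
  intro m x hx
  have hx' : x ∈ Submodule.span k ((Submonoid.closure (s : Set A) : Submonoid A) : Set A) := by
    rw [← Algebra.adjoin_eq_span, hgen]
    exact Submodule.mem_top
  set p : A →ₗ[k] A :=
    (𝒜 (m * d)).subtype ∘ₗ DirectSum.component k ℕ (fun i => 𝒜 i) (m * d) ∘ₗ
      (DirectSum.decomposeLinearEquiv 𝒜).toLinearMap with hp_def
  have hp_apply : ∀ y : A, p y = ((DirectSum.decompose 𝒜 y) (m * d) : A) := fun y => rfl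
  have hp_same : ∀ y ∈ 𝒜 (m * d), p y = y := by
    intro y hy
    rw [hp_apply, DirectSum.decompose_of_mem_same 𝒜 hy]
  have hmap : p x ∈ Submodule.map p
      (Submodule.span k ((Submonoid.closure (s : Set A) : Submonoid A) : Set A)) :=
    ⟨x, hx', rfl⟩
  rw [Submodule.map_span] at hmap
  have hsub : p '' ((Submonoid.closure (s : Set A) : Submonoid A) : Set A) ⊆
      (Subalgebra.toSubmodule S : Set A) := by
    rintro _ ⟨t, ht, rfl⟩
    obtain ⟨M, hMs, rfl⟩ := Submonoid.exists_multiset_of_mem_closure ht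
    have hhom' : M.prod ∈ 𝒜 ((M.map deg).sum) :=
      veronese_aux_prod_mem_graded 𝒜 deg M (fun y hy => hdeg y (hMs y hy))
    by_cases hdeq : (M.map deg).sum = m * d
    · rw [hp_same _ (hdeq ▸ hhom')]
      exact key m M hMs hdeq
    · have hzero : p M.prod = 0 := by
        rw [hp_apply, DirectSum.decompose_of_mem_ne 𝒜 hhom' hdeq]
      rw [hzero]
      exact (Subalgebra.toSubmodule S).zero_mem
  have hle := Submodule.span_le.mpr hsub
  have hpx : p x = x := hp_same x hx
  exact hpx ▸ hle hmap
end
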